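/- In the distinguished pre-Nichols algebra B̃(HV₁) (quotient of T(HV₁) by x_i²=0, the two FK₃ sum relations, u_{i1} − ω u_{1,2−i}, and x₄z_h − q₂ z_h x₄), for j ∈ {2,3} one has (ad_c x₄) u_{1j} = q₂ ω² z₁ z_j − q₂ z_{5−j} z₁, equivalently u_{1j} x₄ + q₁² ω² x₄ u_{1j} = q₂^{−1} z₁ z_j + q₁ z_{5−j} z₁. -/

import Mathlib

/-- `z_h = x_h x₄ − q₁ x₄ x_h` (here `y` plays the role of `x₄` and the first
three generators are indexed by `ZMod 3`, with `x₃ = x 0`, so that `x 3 = x₃`). -/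
def zz {k : Type*} [Field k] {A : Type*} [Ring A] [Algebra k A]
    (q1 : k) (x : ZMod 3 → A) (y : A) (h : ZMod 3) : A :=
  x h * y - q1 • (y * x h)

/-- `u_{ij} = (ad_c x_i) z_j = x_i z_j + q₁ z_{2i−j} x_i`. -/
def uu {k : Type*} [Field k] {A : Type*} [Ring A] [Algebra k A]
    (q1 : k) (x : ZMod 3 → A) (y : A) (i j : ZMod 3) : A :=
  x i * zz q1 x y j + q1 • (zz q1 x y (2 * i - j) * x i)

lemma key {k : Type*} [Field k] {A : Type*} [Ring A] [Algebra k A]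
    (ω q1 q2 : k) (hω : ω ^ 3 = 1) (hq : q1 * q2 = -ω)
    (x1 y Zj Z5j : A)
    (h1 : y * Zj = q2 • (Zj * y)) (h2 : y * Z5j = q2 • (Z5j * y)) :
    y * (x1 * Zj + q1 • (Z5j * x1)) + (q2 ^ 2 * ω ^ 2) • ((x1 * Zj + q1 • (Z5j * x1)) * y)
      = (q2 * ω ^ 2) • ((x1 * y - q1 • (y * x1)) * Zj)
        - q2 • (Z5j * (x1 * y - q1 • (y * x1))) := by
  have hω0 : ω ≠ 0 := by
    intro h; rw [h] at hω; simp at hω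
  have hq2 : q2 ≠ 0 := by
    intro h
    rw [h, mul_zero, eq_comm, neg_eq_zero] at hq
    exact hω0 hq
  have h1' : Zj * y = q2⁻¹ • (y * Zj) := by
    rw [h1, smul_smul, inv_mul_cancel₀ hq2, one_smul]
  have h2'' : y * (Z5j * x1) = q2 • (Z5j * (y * x1)) := by
    rw [← mul_assoc, h2, smul_mul_assoc, mul_assoc]
  simp only [mul_add, add_mul, smul_mul_assoc, mul_smul_comm, mul_assoc, smul_add, smul_smul,
    mul_sub, sub_mul, smul_sub]
  rw [h1', h2'']
  simp only [mul_smul_comm, smul_smul]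
  match_scalars
  · linear_combination ω ^ 2 * hq - hω
  · ring
  · field_simp
  · linear_combination q2 * ω ^ 2 * hq - q2 * hω

/-- in the distinguished pre-Nichols algebra `B̃(HV₁)` (any quotient
of `T(HV₁)` by the relations `x_i² = 0`, the two FK₃ sum relations,
`u_{i1} − ω u_{1,2−i} = 0` and `x₄z_h − q₂z_h x₄ = 0`), for `j ∈ {2,3}` one has
`(ad_c x₄) u_{1j} = q₂ω² z₁z_j − q₂ z_{5−j} z₁`, equivalently
`u_{1j} x₄ + q₁²ω² x₄ u_{1j} = q₂⁻¹ z₁z_j + q₁ z_{5−j} z₁`. -/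
theorem ad_x4_u1j {k : Type*} [Field k] [CharZero k]
    (ω q1 q2 : k) (hω : ω ^ 3 = 1) (hω1 : ω ≠ 1) (hq : q1 * q2 = -ω)
    {A : Type*} [Ring A] [Algebra k A] (x : ZMod 3 → A) (y : A)
    (hx2 : ∀ i : ZMod 3, x i ^ 2 = 0)
    (hs1 : x 1 * x 2 + x 3 * x 1 + x 2 * x 3 = 0)
    (hs2 : x 2 * x 1 + x 1 * x 3 + x 3 * x 2 = 0)
    (hu2 : uu q1 x y 2 1 = ω • uu q1 x y 1 3)
    (hu3 : uu q1 x y 3 1 = ω • uu q1 x y 1 2)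
    (hz : ∀ h : ZMod 3, y * zz q1 x y h = q2 • (zz q1 x y h * y)) :
    ∀ j : ZMod 3, j ≠ 1 →
      (y * uu q1 x y 1 j + (q2 ^ 2 * ω ^ 2) • (uu q1 x y 1 j * y)
          = (q2 * ω ^ 2) • (zz q1 x y 1 * zz q1 x y j)
            - q2 • (zz q1 x y (5 - j) * zz q1 x y 1)) ∧
      (uu q1 x y 1 j * y + (q1 ^ 2 * ω ^ 2) • (y * uu q1 x y 1 j)
          = q2⁻¹ • (zz q1 x y 1 * zz q1 x y j)
            + q1 • (zz q1 x y (5 - j) * zz q1 x y 1)) := by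
  intro j _
  have hω0 : ω ≠ 0 := by
    intro h; rw [h] at hω; simp at hω
  have hq2 : q2 ≠ 0 := by
    intro h
    rw [h, mul_zero, eq_comm, neg_eq_zero] at hq
    exact hω0 hq
  have h5 : (5 : ZMod 3) = 2 * 1 := by decide
  have P1 : y * uu q1 x y 1 j + (q2 ^ 2 * ω ^ 2) • (uu q1 x y 1 j * y)
      = (q2 * ω ^ 2) • (zz q1 x y 1 * zz q1 x y j)
        - q2 • (zz q1 x y (5 - j) * zz q1 x y 1) := by
    rw [h5]
    exact key ω q1 q2 hω hq (x 1) y _ _ (hz j) (hz (2 * 1 - j))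
  refine ⟨P1, ?_⟩
  have e1 : q1 ^ 2 * ω ^ 2 * (q2 ^ 2 * ω ^ 2) = 1 := by
    linear_combination ω ^ 4 * (q1 * q2 - ω) * hq + (ω ^ 3 + 1) * hω
  have e2 : q1 ^ 2 * ω ^ 2 * (q2 * ω ^ 2) = q2⁻¹ := by
    field_simp
    linear_combination e1
  have e3 : q1 ^ 2 * ω ^ 2 * q2 = -q1 := by
    linear_combination q1 * ω ^ 2 * hq - q1 * hω
  have P2 := congrArg (fun a => (q1 ^ 2 * ω ^ 2) • a) P1
  simp only [smul_add, smul_sub, smul_smul, e1, e2, e3, one_smul, neg_smul, sub_neg_eq_add] at P2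
  rw [add_comm] at P2
  exact P2
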